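/- There exists a 3-free set of positive integers whose upper density is at least 1/2. Hence α(3) = sup{upper density of S : S is 3-free} ≥ 1/2. -/

import Mathlib

open Filter

namespace AlphaThreeAux

/-- AP-free permutation of `[0, 2^n)`: odds first, then evens, recursively. -/
def perm : ℕ → ℕ → ℕ
  | 0, _ => 0
  | n+1, t => if t < 2^n then 2 * perm n t + 1 else 2 * perm n (t - 2^n)

lemma two_pow_succ (n : ℕ) : 2 ^ (n + 1) = 2 ^ n + 2 ^ n := by
  rw [pow_succ]; omega

lemma perm_lt : ∀ n t, t < 2 ^ n → perm n t < 2 ^ n := by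
  intro n
  induction n with
  | zero => intro t ht; simpa [perm] using ht
  | succ n ih =>
    intro t ht
    rw [perm]
    have e := two_pow_succ n
    split_ifs with h
    · have := ih t h; omega
    · have h1 : t - 2 ^ n < 2 ^ n := by omega
      have := ih _ h1; omega

lemma perm_inj : ∀ n i j, i < 2 ^ n → j < 2 ^ n → perm n i = perm n j → i = j := by
  intro n
  induction n with
  | zero => intro i j hi hj _; omega
  | succ n ih =>
    intro i j hi hj hij
    have e := two_pow_succ n
    rw [perm, perm] at hij
    split_ifs at hij with h1 h2 h2
    · have := ih i j h1 h2 (by omega); omega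
    · omega
    · omega
    · have := ih (i - 2 ^ n) (j - 2 ^ n) (by omega) (by omega) (by omega); omega

lemma perm_surj : ∀ n y, y < 2 ^ n → ∃ t, t < 2 ^ n ∧ perm n t = y := by
  intro n
  induction n with
  | zero =>
    intro y hy
    refine ⟨0, by norm_num, ?_⟩
    simp only [perm]; omega
  | succ n ih =>
    intro y hy
    have e := two_pow_succ n
    rcases Nat.even_or_odd y with ⟨y', hy'⟩ | ⟨y', hy'⟩
    · obtain ⟨t, ht, hpt⟩ := ih y' (by omega)
      refine ⟨t + 2 ^ n, by omega, ?_⟩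
      rw [perm, if_neg (by omega)]
      have : t + 2 ^ n - 2 ^ n = t := by omega
      rw [this, hpt]; omega
    · obtain ⟨t, ht, hpt⟩ := ih y' (by omega)
      refine ⟨t, by omega, ?_⟩
      rw [perm, if_pos ht, hpt]; omega

lemma perm_noAP : ∀ n i j k, i < j → j < k → k < 2 ^ n →
    perm n i + perm n k = 2 * perm n j → False := by
  intro n
  induction n with
  | zero => intro i j k hij hjk hk _; omega
  | succ n ih =>
    intro i j k hij hjk hk heq
    have e := two_pow_succ n
    rw [perm, perm, perm] at heq
    by_cases hi : i < 2 ^ n <;> by_cases hj : j < 2 ^ n <;> by_cases hk' : k < 2 ^ n <;>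
      simp only [hi, hj, hk', if_true, if_false] at heq
    · exact ih i j k hij hjk hk' (by omega)
    · omega
    · omega
    · omega
    · omega
    · omega
    · omega
    · exact ih (i - 2 ^ n) (j - 2 ^ n) (k - 2 ^ n) (by omega) (by omega) (by omega) (by omega)


/-- Right endpoints (exclusive) of the blocks; `D 0 = 1` is the start. -/
def D : ℕ → ℕ
  | 0 => 1
  | m+1 => D m + 2 ^ ((m+1) * D m + 1)

/-- Exponent for block `m`: block `m` has `2 ^ E m` elements. -/
def E (m : ℕ) : ℕ := (m + 1) * D m

/-- Left endpoint of block `m`; block `m` is `[C m, D (m+1))`. -/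
def C (m : ℕ) : ℕ := D m + 2 ^ E m

lemma D_succ (m : ℕ) : D (m + 1) = D m + 2 ^ (E m + 1) := rfl

lemma D_pos (m : ℕ) : 1 ≤ D m := by
  induction m with
  | zero => simp [D]
  | succ m ih =>
    have hb : 1 ≤ 2 ^ (E m + 1) := Nat.one_le_two_pow
    rw [D_succ]; omega

lemma D_succ_eq (m : ℕ) : D (m + 1) = C m + 2 ^ E m := by
  rw [D_succ, C, two_pow_succ]; omega

lemma two_C (m : ℕ) : 2 * C m = D m + D (m + 1) := by
  rw [D_succ, C, two_pow_succ]; omega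

lemma D_lt_succ (m : ℕ) : D m < D (m + 1) := by
  have := Nat.one_le_two_pow (n := E m + 1)
  rw [D_succ]; omega

lemma D_mono : Monotone D :=
  monotone_nat_of_le_succ fun m => (D_lt_succ m).le

lemma D_le_two_pow_E (m : ℕ) : D m + 1 ≤ 2 ^ E m := by
  have h1 : D m ≤ E m := by
    have := D_pos m
    calc D m = 1 * D m := by omega
    _ ≤ (m + 1) * D m := Nat.mul_le_mul_right _ (by omega)
  have h2 : E m < 2 ^ E m := Nat.lt_two_pow_self
  omega

lemma two_D_lt_C (m : ℕ) : 2 * D m < C m := by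
  have := D_le_two_pow_E m
  rw [C]; omega

lemma E_lt_two_pow (m : ℕ) : E m + 1 ≤ 2 ^ E m := Nat.lt_two_pow_self

lemma D_le_C (m : ℕ) : D m ≤ C m := by
  have := Nat.one_le_two_pow (n := E m); rw [C]; omega

lemma C_pos (m : ℕ) : 1 ≤ C m := le_trans (D_pos m) (D_le_C m)

lemma add_one_le_D (m : ℕ) : m + 1 ≤ D m := by
  induction m with
  | zero => simp [D]
  | succ m ih =>
    have h := Nat.one_le_two_pow (n := E m + 1)
    rw [D_succ]; omega

/-- Cumulative position offsets: block `m+q` (relative to base `m`) starts at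
position `Q m q` among the positions handled from base `m` onwards. -/
def Q : ℕ → ℕ → ℕ
  | _, 0 => 0
  | m, q+1 => 2 ^ E m + Q (m+1) q

lemma Q_succ_right : ∀ q m, Q m (q + 1) = Q m q + 2 ^ E (m + q) := by
  intro q
  induction q with
  | zero => intro m; simp [Q]
  | succ q ih =>
    intro m
    have h1 : Q m (q + 1 + 1) = 2 ^ E m + Q (m + 1) (q + 1) := rfl
    have h2 : Q m (q + 1) = 2 ^ E m + Q (m + 1) q := rfl
    rw [h1, ih (m + 1), h2]
    have : m + 1 + q = m + (q + 1) := by omega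
    rw [this]
    omega

/-- The global enumeration, starting from block `m`. -/
def g (m i : ℕ) : ℕ :=
  if h : i < 2 ^ E m then C m + perm (E m) i
  else g (m + 1) (i - 2 ^ E m)
termination_by i
decreasing_by
  have : 1 ≤ 2 ^ E m := Nat.one_le_two_pow
  omega

lemma g_eval : ∀ q m t, t < 2 ^ E (m + q) → g m (Q m q + t) = C (m + q) + perm (E (m + q)) t := by
  intro q
  induction q with
  | zero =>
    intro m t ht
    simp only [Nat.add_zero] at ht ⊢
    rw [Q]
    simp only [Nat.zero_add]
    rw [g, dif_pos ht]
  | succ q ih =>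
    intro m t ht
    have hQ : Q m (q + 1) = 2 ^ E m + Q (m + 1) q := rfl
    have hidx : m + 1 + q = m + (q + 1) := by omega
    rw [hQ]
    have harg : 2 ^ E m + Q (m + 1) q + t = (Q (m + 1) q + t) + 2 ^ E m := by omega
    rw [harg, g, dif_neg (by omega)]
    have harg2 : Q (m + 1) q + t + 2 ^ E m - 2 ^ E m = Q (m + 1) q + t := by omega
    rw [harg2, ih (m + 1) t (by rw [hidx]; exact ht), hidx]

lemma decomp : ∀ i m, ∃ q t, t < 2 ^ E (m + q) ∧ i = Q m q + t := by
  intro i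
  induction i using Nat.strong_induction_on with
  | _ i ih =>
    intro m
    by_cases h : i < 2 ^ E m
    · exact ⟨0, i, by simpa using h, by simp [Q]⟩
    · have h1 : 1 ≤ 2 ^ E m := Nat.one_le_two_pow
      obtain ⟨q, t, ht, hi⟩ := ih (i - 2 ^ E m) (by omega) (m + 1)
      refine ⟨q + 1, t, ?_, ?_⟩
      · have : m + 1 + q = m + (q + 1) := by omega
        rw [← this]; exact ht
      · have hQ : Q m (q + 1) = 2 ^ E m + Q (m + 1) q := rfl
        omega

/-- The global enumeration. -/
def f (i : ℕ) : ℕ := g 0 i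

/-- The set. -/
def S : Set ℕ := ⋃ m, Set.Ico (C m) (D (m + 1))

lemma f_spec (i : ℕ) : ∃ q t, t < 2 ^ E q ∧ i = Q 0 q + t ∧ f i = C q + perm (E q) t := by
  obtain ⟨q, t, ht, hi⟩ := decomp i 0
  simp only [Nat.zero_add] at ht hi
  exact ⟨q, t, ht, hi, by rw [f, hi]; simpa using g_eval q 0 t (by simpa using ht)⟩

lemma f_mem_block {q t : ℕ} (ht : t < 2 ^ E q) :
    C q ≤ C q + perm (E q) t ∧ C q + perm (E q) t < D (q + 1) := by
  have h := perm_lt (E q) t ht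
  constructor
  · omega
  · rw [D_succ_eq]; omega

lemma Q0_mono : Monotone (Q 0) := by
  apply monotone_nat_of_le_succ
  intro q
  rw [Q_succ_right]
  exact Nat.le_add_right _ _

/-- position order determines block order -/
lemma block_le {p q tp tq : ℕ} (hp : tp < 2 ^ E p) (hlt : Q 0 p + tp < Q 0 q + tq)
    (hq : tq < 2 ^ E q) : p ≤ q := by
  by_contra h
  push_neg at h
  have h1 : Q 0 (q + 1) ≤ Q 0 p := Q0_mono h
  have h2 : Q 0 (q + 1) = Q 0 q + 2 ^ E q := by simpa using Q_succ_right q 0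
  omega


lemma f_inj : Function.Injective f := by
  intro i j h
  obtain ⟨p, ti, hti, hi, hfi⟩ := f_spec i
  obtain ⟨q, tj, htj, hj, hfj⟩ := f_spec j
  have bi := f_mem_block hti
  have bj := f_mem_block htj
  have hpq : p = q := by
    rcases lt_trichotomy p q with h' | h' | h'
    · have hd : D (p + 1) ≤ C q := le_trans (D_mono (by omega)) (D_le_C q)
      rw [hfi, hfj] at h; omega
    · exact h'
    · have hd : D (q + 1) ≤ C p := le_trans (D_mono (by omega)) (D_le_C p)
      rw [hfi, hfj] at h; omega
  subst hpq
  rw [hfi, hfj] at h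
  have : ti = tj := perm_inj (E p) ti tj hti htj (by omega)
  omega

lemma range_f : Set.range f = S := by
  ext y
  constructor
  · rintro ⟨i, rfl⟩
    obtain ⟨q, t, ht, hi, hfi⟩ := f_spec i
    have b := f_mem_block ht
    exact Set.mem_iUnion.2 ⟨q, Set.mem_Ico.2 ⟨by omega, by omega⟩⟩
  · intro hy
    obtain ⟨m, hm⟩ := Set.mem_iUnion.1 hy
    rw [Set.mem_Ico] at hm
    have hy2 : y - C m < 2 ^ E m := by
      have := D_succ_eq m; omega
    obtain ⟨t, ht, hpt⟩ := perm_surj (E m) (y - C m) hy2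
    refine ⟨Q 0 m + t, ?_⟩
    have := g_eval m 0 t (by simpa using ht)
    simp only [Nat.zero_add] at this
    rw [f, this, hpt]
    omega

lemma noAP : ∀ i j k : ℕ, i < j → j < k → f i + f k = 2 * f j → False := by
  intro i j k hij hjk heq
  obtain ⟨p, ti, hti, hi, hfi⟩ := f_spec i
  obtain ⟨q, tj, htj, hj, hfj⟩ := f_spec j
  obtain ⟨r, tk, htk, hk, hfk⟩ := f_spec k
  have bi := f_mem_block hti
  have bj := f_mem_block htj
  have bk := f_mem_block htk
  have hpq : p ≤ q := block_le hti (by omega) htj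
  have hqr : q ≤ r := block_le htj (by omega) htk
  rcases lt_or_eq_of_le hqr with hqr' | hqr'
  · -- q < r : the largest value is too large
    have h2 : 2 * D r < C r := two_D_lt_C r
    have h4 : D (q + 1) ≤ D r := D_mono (by omega)
    have h5 : 1 ≤ C p := C_pos p
    omega
  · subst hqr'
    rcases lt_or_eq_of_le hpq with hpq' | hpq'
    · -- p < q = r : the smallest value is too small
      have h1 : D (p + 1) ≤ D q := D_mono (by omega)
      have h2 := two_C q
      omega
    · subst hpq'
      -- all in the same block: use perm_noAP
      have hts : ti < tj ∧ tj < tk := by omega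
      have hperm : perm (E p) ti + perm (E p) tk = 2 * perm (E p) tj := by omega
      exact perm_noAP (E p) ti tj tk hts.1 hts.2 htk hperm

lemma zero_not_mem : 0 ∉ S := by
  intro h
  obtain ⟨m, hm⟩ := Set.mem_iUnion.1 h
  rw [Set.mem_Ico] at hm
  have := C_pos m
  omega

lemma card_upper (T : Set ℕ) (n : ℕ) : Nat.card ↥(T ∩ Set.Icc 1 n) ≤ n := by
  calc Nat.card ↥(T ∩ Set.Icc 1 n) ≤ Nat.card ↥(Set.Icc 1 n) :=
        Nat.card_mono (Set.finite_Icc _ _) Set.inter_subset_right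
  _ = n := by
      rw [Nat.card_coe_set_eq, ← Finset.coe_Icc, Set.ncard_coe_finset, Nat.card_Icc]
      omega

lemma ratio_le_one (T : Set ℕ) (n : ℕ) : (Nat.card ↥(T ∩ Set.Icc 1 n) : ℝ) / n ≤ 1 := by
  rcases Nat.eq_zero_or_pos n with h | h
  · simp [h]
  · rw [div_le_one (by exact_mod_cast h)]
    exact_mod_cast card_upper T n

lemma ratio_nonneg (T : Set ℕ) (n : ℕ) : (0:ℝ) ≤ (Nat.card ↥(T ∩ Set.Icc 1 n) : ℝ) / n := by
  positivity

lemma card_lower (m : ℕ) : 2 ^ E m ≤ Nat.card ↥(S ∩ Set.Icc 1 (D (m + 1) - 1)) := by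
  have hD := D_succ_eq m
  have hC := C_pos m
  have hX : 1 ≤ 2 ^ E m := Nat.one_le_two_pow
  have hsub : Set.Ico (C m) (D (m + 1)) ⊆ S ∩ Set.Icc 1 (D (m + 1) - 1) := by
    intro z hz
    rw [Set.mem_Ico] at hz
    exact ⟨Set.mem_iUnion.2 ⟨m, Set.mem_Ico.2 hz⟩, Set.mem_Icc.2 ⟨by omega, by omega⟩⟩
  have hfin : (S ∩ Set.Icc 1 (D (m + 1) - 1)).Finite :=
    Set.Finite.subset (Set.finite_Icc _ _) Set.inter_subset_right
  have hmono := Nat.card_mono hfin hsub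
  have hcard : Nat.card ↥(Set.Ico (C m) (D (m + 1))) = 2 ^ E m := by
    rw [Nat.card_coe_set_eq, ← Finset.coe_Ico, Set.ncard_coe_finset, Nat.card_Ico]
    omega
  rw [← hcard]
  exact hmono

lemma ratio_lower (m : ℕ) :
    ((m : ℝ) + 1) / (2 * m + 3) ≤
      (Nat.card ↥(S ∩ Set.Icc 1 (D (m + 1) - 1)) : ℝ) / ((D (m + 1) - 1 : ℕ) : ℝ) := by
  have hy : 1 ≤ D m := D_pos m
  have hx : (m + 1) * D m + 1 ≤ 2 ^ E m := E_lt_two_pow m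
  have hn : D (m + 1) - 1 = D m + 2 ^ E m + 2 ^ E m - 1 := by
    rw [D_succ, two_pow_succ]; omega
  have hX1 : 1 ≤ 2 ^ E m := Nat.one_le_two_pow
  have hcard := card_lower m
  have hnpos : 1 ≤ D (m + 1) - 1 := by omega
  have hxR : ((m : ℝ) + 1) * (D m : ℝ) + 1 ≤ ((2 ^ E m : ℕ) : ℝ) := by exact_mod_cast hx
  have hcR : ((2 ^ E m : ℕ) : ℝ) ≤ (Nat.card ↥(S ∩ Set.Icc 1 (D (m + 1) - 1)) : ℝ) := by
    exact_mod_cast hcard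
  have hnR : ((D (m + 1) - 1 : ℕ) : ℝ) = (D m : ℝ) + ((2 ^ E m : ℕ) : ℝ) + ((2 ^ E m : ℕ) : ℝ) - 1 := by
    rw [hn]
    push_cast [Nat.cast_sub (by omega : 1 ≤ D m + 2 ^ E m + 2 ^ E m)]
    ring
  have hnRpos : (0 : ℝ) < ((D (m + 1) - 1 : ℕ) : ℝ) := by exact_mod_cast hnpos
  have hm0 : (0 : ℝ) ≤ (m : ℝ) := Nat.cast_nonneg m
  rw [div_le_div_iff₀ (by positivity) hnRpos, hnR]
  nlinarith [mul_le_mul_of_nonneg_left hcR (by linarith : (0:ℝ) ≤ 2 * (m:ℝ) + 3), hxR,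
    mul_le_mul_of_nonneg_left hxR hm0]

end AlphaThreeAux

/-- `f : ℕ → ℕ` is a (bijective) enumeration of the set `S`. -/
def IsPermOf (f : ℕ → ℕ) (S : Set ℕ) : Prop :=
  Function.Injective f ∧ Set.range f = S

/-- A set `S` of naturals is 3-free if some enumeration of `S` contains no
3-term arithmetic progression (with nonzero, possibly negative, common
difference) as a subsequence. -/
def ThreeFree (S : Set ℕ) : Prop :=
  ∃ f : ℕ → ℕ, IsPermOf f S ∧
    ¬ ∃ i j k : ℕ, i < j ∧ j < k ∧
      ((f j : ℤ) - (f i : ℤ) = (f k : ℤ) - (f j : ℤ)) ∧ f i ≠ f j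

/-- The upper density `limsup |S ∩ [1, n]| / n` of a set of naturals. -/
noncomputable def upperDensity (S : Set ℕ) : ℝ :=
  limsup (fun n : ℕ => (Nat.card ↥(S ∩ Set.Icc 1 n) : ℝ) / n) atTop

namespace AlphaThreeAux

lemma S_threeFree : ThreeFree S := by
  refine ⟨f, ⟨f_inj, range_f⟩, ?_⟩
  rintro ⟨i, j, k, hij, hjk, heq, -⟩
  have h : f i + f k = 2 * f j := by omega
  exact noAP i j k hij hjk h

lemma S_upperDensity : 1 / 2 ≤ upperDensity S := by
  have hbd : IsBoundedUnder (· ≤ ·) atTop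
      (fun n : ℕ => (Nat.card ↥(S ∩ Set.Icc 1 n) : ℝ) / n) :=
    isBoundedUnder_of ⟨1, fun n => ratio_le_one S n⟩
  have key : ∀ w : ℝ, w < 1 / 2 → w ≤ upperDensity S := by
    intro w hw
    refine le_limsup_of_frequently_le ?_ hbd
    rw [frequently_atTop]
    intro N
    have hεpos : 0 < 1 / 2 - w := by linarith
    obtain ⟨M, hM⟩ := exists_nat_ge (1 / (1 / 2 - w))
    set m := M + N + 1 with hm
    refine ⟨D (m + 1) - 1, ?_, ?_⟩
    · have h1 := add_one_le_D (m + 1)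
      omega
    · have h1 := ratio_lower m
      have h2 : w ≤ ((m : ℝ) + 1) / (2 * m + 3) := by
        have hmM : (M : ℝ) ≤ (m : ℝ) := by exact_mod_cast (by omega : M ≤ m)
        have hm' : 1 / (1 / 2 - w) ≤ (m : ℝ) := le_trans hM hmM
        have hm1 : 1 ≤ (m : ℝ) * (1 / 2 - w) := (div_le_iff₀ hεpos).mp hm'
        rw [le_div_iff₀ (by positivity)]
        nlinarith [Nat.cast_nonneg (α := ℝ) m]
      exact le_trans h2 h1
  refine le_of_forall_lt fun c hc => ?_
  have h1 : c < (c + 1 / 2) / 2 := by linarith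
  exact lt_of_lt_of_le h1 (key _ (by linarith))

end AlphaThreeAux

/-- There is a 3-free set of positive integers with upper density at least
`1/2`; hence `α(3) ≥ 1/2`. -/
theorem alpha_three_ge_half :
    (∃ S : Set ℕ, 0 ∉ S ∧ ThreeFree S ∧ 1 / 2 ≤ upperDensity S) ∧
    1 / 2 ≤ sSup {x : ℝ | ∃ S : Set ℕ, 0 ∉ S ∧ ThreeFree S ∧ upperDensity S = x} := by
  have hmain : ∃ S : Set ℕ, 0 ∉ S ∧ ThreeFree S ∧ 1 / 2 ≤ upperDensity S :=
    ⟨AlphaThreeAux.S, AlphaThreeAux.zero_not_mem, AlphaThreeAux.S_threeFree,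
      AlphaThreeAux.S_upperDensity⟩
  refine ⟨hmain, ?_⟩
  obtain ⟨S, h0, hTF, hUD⟩ := hmain
  have hbdd : BddAbove {x : ℝ | ∃ S : Set ℕ, 0 ∉ S ∧ ThreeFree S ∧ upperDensity S = x} := by
    refine ⟨1, ?_⟩
    rintro x ⟨T, -, -, rfl⟩
    refine limsup_le_of_le ?_ (Eventually.of_forall fun n => AlphaThreeAux.ratio_le_one T n)
    exact isCoboundedUnder_le_of_le atTop fun n => AlphaThreeAux.ratio_nonneg T n
  exact le_trans hUD (le_csSup hbdd ⟨S, h0, hTF, rfl⟩)
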